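/- Let V be a finite-dimensional vector space over a field k, let S, N : V → V be commuting linear maps with N nilpotent, let m ≥ 1, and let F ⊆ V be an S-invariant subspace such that the restriction of N^i to F is injective for every 0 ≤ i ≤ m−1 and V = F ⊕ NF ⊕ ⋯ ⊕ N^{m−1}F. Then each N^i F is S-invariant and the characteristic polynomial of S on V equals the m-th power of the characteristic polynomial of the restriction of S to F: χ_S = (χ_{S|F})^m. -/

import Mathlib

open Matrix Polynomial

lemma charmatrix_blockDiagonal' {R ι κ : Type*} [CommRing R] [Fintype ι] [DecidableEq ι]
    [Fintype κ] [DecidableEq κ] (M : ι → Matrix κ κ R) :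
    charmatrix (blockDiagonal M) = blockDiagonal (fun i => charmatrix (M i)) := by
  ext ⟨a, i⟩ ⟨c, j⟩
  by_cases h : i = j
  · subst h
    by_cases h2 : a = c <;>
      simp [charmatrix_apply, blockDiagonal_apply, diagonal_apply, h2, Prod.ext_iff]
  · simp [charmatrix_apply, blockDiagonal_apply, diagonal_apply, Prod.ext_iff, h]

lemma charpoly_blockDiagonal' {R ι κ : Type*} [CommRing R] [Fintype ι] [DecidableEq ι]
    [Fintype κ] [DecidableEq κ] (M : ι → Matrix κ κ R) :
    (blockDiagonal M).charpoly = ∏ i, (M i).charpoly := by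
  simp [Matrix.charpoly, charmatrix_blockDiagonal', det_blockDiagonal]



/-- Let `S, N` be commuting linear maps on a finite-dimensional space `V`
with `N` nilpotent, `m ≥ 1`, and let `F` be an `S`-invariant subspace such that `N^i` is
injective on `F` for `0 ≤ i ≤ m-1` and `V = F ⊕ NF ⊕ ⋯ ⊕ N^(m-1)F`. Then each `N^i F` is
`S`-invariant and `χ_S = (χ_(S|F))^m`. -/
theorem stmt_16 {k V : Type*} [Field k] [AddCommGroup V] [Module k V] [FiniteDimensional k V]
    (S N : V →ₗ[k] V) (hcomm : S ∘ₗ N = N ∘ₗ S) (hN : IsNilpotent N) (m : ℕ) (hm : 1 ≤ m)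
    (F : Submodule k V) (hSF : ∀ x ∈ F, S x ∈ F)
    (hinj : ∀ i : Fin m, ∀ x ∈ F, (N ^ (i : ℕ)) x = 0 → x = 0)
    (hsum : DirectSum.IsInternal (fun i : Fin m => F.map (N ^ (i : ℕ)))) :
    (∀ i : Fin m, ∀ x ∈ F.map (N ^ (i : ℕ)), S x ∈ F.map (N ^ (i : ℕ))) ∧
      S.charpoly = (S.restrict hSF).charpoly ^ m := by
  classical
  have hC : Commute S N := by
    show S * N = N * S
    rw [Module.End.mul_eq_comp, Module.End.mul_eq_comp, hcomm]
  have hcom : ∀ (i : ℕ) (x : V), S ((N ^ i) x) = (N ^ i) (S x) := by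
    intro i x
    have := (hC.pow_right i)
    exact DFunLike.congr_fun this x
  have hinv : ∀ i : Fin m, ∀ x ∈ F.map (N ^ (i : ℕ)), S x ∈ F.map (N ^ (i : ℕ)) := by
    intro i x hx
    obtain ⟨y, hy, rfl⟩ := hx
    exact ⟨S y, hSF y hy, (hcom i y).symm⟩
  refine ⟨hinv, ?_⟩
  set κ := Module.Free.ChooseBasisIndex k F with hκ
  set b : Module.Basis κ k F := Module.Free.chooseBasis k F with hb
  -- equivalence F ≃ N^i F
  have einj : ∀ i : Fin m, Function.Bijective ((N ^ (i : ℕ)).submoduleMap F) := by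
    intro i
    refine ⟨fun x y hxy => ?_, (N ^ (i : ℕ)).submoduleMap_surjective F⟩
    have h1 : (N ^ (i : ℕ)) ((x : V) - y) = 0 := by
      rw [map_sub, sub_eq_zero]
      exact congrArg Subtype.val hxy
    have := hinj i ((x : V) - y) (sub_mem x.2 y.2) h1
    exact Subtype.ext (sub_eq_zero.mp this)
  set e : ∀ i : Fin m, F ≃ₗ[k] F.map (N ^ (i : ℕ)) :=
    fun i => LinearEquiv.ofBijective _ (einj i) with he
  have hecoe : ∀ (i : Fin m) (x : F), ((e i x : F.map (N ^ (i : ℕ))) : V) = (N ^ (i : ℕ)) x :=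
    fun i x => rfl
  set B : Module.Basis (Σ _ : Fin m, κ) k V := hsum.collectedBasis (fun i => b.map (e i)) with hB
  set M : Matrix κ κ k := LinearMap.toMatrix b b (S.restrict hSF) with hM
  set eqv : (Σ _ : Fin m, κ) ≃ κ × Fin m :=
    (Equiv.sigmaEquivProd (Fin m) κ).trans (Equiv.prodComm _ _) with heqv
  have key : LinearMap.toMatrix B B S =
      Matrix.reindex eqv.symm eqv.symm (blockDiagonal fun _ : Fin m => M) := by
    ext ⟨j, a⟩ ⟨i, c⟩
    have hBval : B ⟨i, c⟩ = ((e i) (b c) : V) := by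
      rw [hB, DirectSum.IsInternal.collectedBasis_coe]
      simp
    have hS : S (B ⟨i, c⟩) = (((e i) ((S.restrict hSF) (b c))) : V) := by
      rw [hBval, hecoe, hecoe]
      simp only [LinearMap.restrict_coe_apply]
      exact hcom i (b c)
    have hmem : S (B ⟨i, c⟩) ∈ F.map (N ^ (i : ℕ)) := by
      rw [hS]; exact ((e i) ((S.restrict hSF) (b c))).2
    rw [LinearMap.toMatrix_apply]
    by_cases hij : j = i
    · subst hij
      rw [hsum.collectedBasis_repr_of_mem _ hmem]
      have : (⟨S (B ⟨j, c⟩), hmem⟩ : F.map (N ^ (j : ℕ))) = (e j) ((S.restrict hSF) (b c)) :=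
        Subtype.ext hS
      rw [this]
      simp [Module.Basis.map_repr, LinearMap.toMatrix_apply, hM, Matrix.blockDiagonal_apply, heqv,
        Equiv.sigmaEquivProd, Equiv.prodComm]
    · rw [hsum.collectedBasis_repr_of_mem_ne _ (Ne.symm hij) hmem]
      simp [Matrix.blockDiagonal_apply, hij, heqv, Equiv.sigmaEquivProd, Equiv.prodComm,
        Ne.symm hij]
  calc S.charpoly = (LinearMap.toMatrix B B S).charpoly := (LinearMap.charpoly_toMatrix S B).symm
    _ = (blockDiagonal fun _ : Fin m => M).charpoly := by rw [key, Matrix.charpoly_reindex]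
    _ = ∏ _i : Fin m, M.charpoly := charpoly_blockDiagonal' _
    _ = M.charpoly ^ m := by simp
    _ = (S.restrict hSF).charpoly ^ m := by rw [hM, LinearMap.charpoly_toMatrix]
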